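/- Let ξ: ℤ²_{≥1} → ℝ satisfy the four-point relation ξ(x+1,y+1) = F(x+1,y+1) − b·F(x,y+1) − bq·F(x+1,y) + (b+bq−1)F(x,y) for a function F: ℤ²_{≥0} → ℝ. Then for all X,Y ≥ 1: −(1−b)Σ_{x=1}^{X−1}F(x,0) − (1−bq)Σ_{y=1}^{Y−1}F(0,y) + (1−b)Σ_{x=1}^{X−1}F(x,Y) + (1−bq)Σ_{y=1}^{Y−1}F(X,y) + (b+bq−1)F(0,0) − bq·F(X,0) − b·F(0,Y) + F(X,Y) = Σ_{x=1}^{X}Σ_{y=1}^{Y}ξ(x,y). -/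

import Mathlib

open Finset

lemma row_sum (b q : ℝ) (F : ℕ → ℕ → ℝ) (ξ : ℕ → ℕ → ℝ)
    (hξ : ∀ x y : ℕ,
      ξ (x+1) (y+1) = F (x+1) (y+1) - b * F x (y+1) - b * q * F (x+1) y
        + (b + b * q - 1) * F x y) :
    ∀ m j : ℕ, ∑ i ∈ Finset.range m, ξ (i+1) (j+1)
      = F m (j+1) - b * q * F m j - F 0 (j+1) + b * q * F 0 j
        + (1 - b) * ∑ i ∈ Finset.range m, (F i (j+1) - F i j) := by
  intro m j
  induction m with
  | zero => simp
  | succ m ih =>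
    rw [Finset.sum_range_succ, ih, hξ m j, Finset.sum_range_succ]
    ring

lemma rect_sum (b q : ℝ) (F : ℕ → ℕ → ℝ) (ξ : ℕ → ℕ → ℝ)
    (hξ : ∀ x y : ℕ,
      ξ (x+1) (y+1) = F (x+1) (y+1) - b * F x (y+1) - b * q * F (x+1) y
        + (b + b * q - 1) * F x y) :
    ∀ m n : ℕ, ∑ i ∈ Finset.range m, ∑ j ∈ Finset.range n, ξ (i+1) (j+1)
      = (F m n - F 0 n - F m 0 + F 0 0)
        + (1 - b) * (∑ i ∈ Finset.range m, (F i n - F i 0))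
        + (1 - b * q) * (∑ j ∈ Finset.range n, (F m j - F 0 j)) := by
  intro m n
  induction n with
  | zero => simp
  | succ n ih =>
    have hsplit : ∑ i ∈ Finset.range m, ∑ j ∈ Finset.range (n+1), ξ (i+1) (j+1)
        = (∑ i ∈ Finset.range m, ∑ j ∈ Finset.range n, ξ (i+1) (j+1))
          + ∑ i ∈ Finset.range m, ξ (i+1) (n+1) := by
      rw [← Finset.sum_add_distrib]
      exact Finset.sum_congr rfl fun i _ => Finset.sum_range_succ _ n
    have hcomb : ∑ i ∈ Finset.range m, (F i (n+1) - F i 0)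
        = (∑ i ∈ Finset.range m, (F i n - F i 0))
          + ∑ i ∈ Finset.range m, (F i (n+1) - F i n) := by
      rw [← Finset.sum_add_distrib]
      exact Finset.sum_congr rfl fun i _ => by ring
    rw [hsplit, ih, row_sum b q F ξ hξ m n, Finset.sum_range_succ, hcomb]
    ring

/-- Integrated form of the four-point relation (Corollary 3.3 of Borodin–Gorin):
summing the relation over the rectangle `[0,X−1] × [0,Y−1]` and collecting
boundary terms. Here `F(x,y)` plays the role of `q^{H(x,y)}`. -/
theorem stmt_16 (b q : ℝ) (F : ℕ → ℕ → ℝ) (ξ : ℕ → ℕ → ℝ)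
    (hξ : ∀ x y : ℕ,
      ξ (x+1) (y+1) = F (x+1) (y+1) - b * F x (y+1) - b * q * F (x+1) y
        + (b + b * q - 1) * F x y) :
    ∀ X Y : ℕ, 1 ≤ X → 1 ≤ Y →
      -(1 - b) * (∑ x ∈ Finset.Icc 1 (X - 1), F x 0)
        - (1 - b * q) * (∑ y ∈ Finset.Icc 1 (Y - 1), F 0 y)
        + (1 - b) * (∑ x ∈ Finset.Icc 1 (X - 1), F x Y)
        + (1 - b * q) * (∑ y ∈ Finset.Icc 1 (Y - 1), F X y)
        + (b + b * q - 1) * F 0 0 - b * q * F X 0 - b * F 0 Y + F X Y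
      = ∑ x ∈ Finset.Icc 1 X, ∑ y ∈ Finset.Icc 1 Y, ξ x y := by
  intro X Y hX hY
  obtain ⟨a, rfl⟩ : ∃ a, X = a + 1 := ⟨X - 1, (Nat.succ_pred_eq_of_pos hX).symm⟩
  obtain ⟨c, rfl⟩ : ∃ c, Y = c + 1 := ⟨Y - 1, (Nat.succ_pred_eq_of_pos hY).symm⟩
  -- convert Icc sums to range sums
  have hIcc : ∀ (k : ℕ) (f : ℕ → ℝ),
      ∑ x ∈ Finset.Icc 1 k, f x = ∑ i ∈ Finset.range k, f (i+1) := by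
    intro k f
    rw [← Finset.Ico_add_one_right_eq_Icc, Finset.sum_Ico_eq_sum_range]
    simp [add_comm]
  have hRHS : ∑ x ∈ Finset.Icc 1 (a+1), ∑ y ∈ Finset.Icc 1 (c+1), ξ x y
      = ∑ i ∈ Finset.range (a+1), ∑ j ∈ Finset.range (c+1), ξ (i+1) (j+1) := by
    rw [hIcc]
    exact Finset.sum_congr rfl fun i _ => hIcc _ _
  rw [hRHS, rect_sum b q F ξ hξ (a+1) (c+1)]
  simp only [Nat.add_sub_cancel, hIcc]
  rw [Finset.sum_range_succ' (fun i => F i (c+1) - F i 0) a,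
      Finset.sum_range_succ' (fun j => F (a+1) j - F 0 j) c,
      Finset.sum_sub_distrib, Finset.sum_sub_distrib]
  ring
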